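/- For every Schwartz function f : ℝ → ℂ and every real s, ∫₀^∞ ( v f'(v) + (1/2) f(v) ) v^{1/2 - i s} (dv/v) = i s · ∫₀^∞ f(v) v^{1/2 - i s} (dv/v). (Thus the Mellin-type transform 𝒰(f)(s) = π^{-1/2} ∫₀^∞ f(v) v^{1/2 - i s} dv/v conjugates the operator H + 1/2, with H = x ∂_x, into multiplication by i s, i.e. it gives the canonical form of the scaling operator 𝕊 = -i(H + 1/2).) -/

import Mathlib

open MeasureTheory Complex
open Filter Asymptotics Set

lemma aux_bound (g : SchwartzMap ℝ ℂ) (k : ℕ) : ∃ C, ∀ x : ℝ, ‖x‖ ^ k * ‖g x‖ ≤ C := by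
  obtain ⟨C, -, hC⟩ := g.decay k 0
  exact ⟨C, fun x => by simpa using hC x⟩

lemma aux_isBigO_atTop (g : SchwartzMap ℝ ℂ) (a : ℝ) :
    (fun x : ℝ => g x) =O[atTop] fun x : ℝ => x ^ (-a) := by
  have h1 := g.isBigO_cocompact_rpow (-a)
  refine (h1.mono atTop_le_cocompact).congr' EventuallyEq.rfl ?_
  filter_upwards [eventually_ge_atTop (0:ℝ)] with x hx
  rw [Real.norm_of_nonneg hx]

lemma aux_integrable (g : SchwartzMap ℝ ℂ) {w : ℂ} (hw : 0 < w.re) :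
    IntegrableOn (fun x : ℝ => g x * (x : ℂ) ^ (w - 1)) (Ioi 0) := by
  have h : MellinConvergent (fun x : ℝ => g x) w := by
    refine mellinConvergent_of_isBigO_rpow (a := w.re + 1) (b := 0)
      (g.continuous.locallyIntegrable.locallyIntegrableOn _)
      (aux_isBigO_atTop g _) (by linarith) ?_ hw
    obtain ⟨C, hC⟩ := aux_bound g 0
    refine (IsBigO.of_bound (g := fun _ => (1:ℝ)) C ?_).congr' EventuallyEq.rfl ?_
    · filter_upwards with x
      simpa using hC x
    · filter_upwards [self_mem_nhdsWithin] with x (hx : (0:ℝ) < x)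
      simp [Real.rpow_zero]
  refine h.congr_fun (fun x hx => ?_) measurableSet_Ioi
  simp [smul_eq_mul, mul_comm]

lemma aux_tendsto_zero (g : SchwartzMap ℝ ℂ) {w : ℂ} (hw : 0 < w.re) :
    Tendsto (fun x : ℝ => g x * (x : ℂ) ^ w) (nhdsWithin 0 (Ioi 0)) (nhds 0) := by
  obtain ⟨C, hC⟩ := aux_bound g 0
  have hC' : ∀ x : ℝ, ‖g x‖ ≤ C := fun x => by simpa using hC x
  apply squeeze_zero_norm' (a := fun x : ℝ => C * x ^ w.re)
  · filter_upwards [self_mem_nhdsWithin] with x (hx : (0:ℝ) < x)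
    rw [norm_mul, Complex.norm_cpow_eq_rpow_re_of_pos hx]
    exact mul_le_mul_of_nonneg_right (hC' x) (Real.rpow_nonneg hx.le _)
  · have : Tendsto (fun x : ℝ => x ^ w.re) (nhdsWithin 0 (Ioi 0)) (nhds 0) := by
      have := (Real.continuousAt_rpow_const 0 w.re (Or.inr hw.le)).tendsto
      rw [Real.zero_rpow hw.ne'] at this
      exact this.mono_left nhdsWithin_le_nhds
    simpa using this.const_mul C

lemma aux_tendsto_zero_atTop (g : SchwartzMap ℝ ℂ) (w : ℂ) :
    Tendsto (fun x : ℝ => g x * (x : ℂ) ^ w) atTop (nhds 0) := by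
  set k : ℕ := ⌈w.re⌉₊ + 1
  have hk : w.re - k < 0 := by
    have := Nat.le_ceil w.re
    have : w.re < k := by
      simp only [k]
      push_cast
      linarith
    linarith
  obtain ⟨C, hC⟩ := aux_bound g k
  apply squeeze_zero_norm' (a := fun x : ℝ => C * x ^ (w.re - k))
  · filter_upwards [eventually_gt_atTop (0:ℝ)] with x hx
    have hxk : (0:ℝ) < x ^ (k:ℝ) := Real.rpow_pos_of_pos hx _
    have h1 : ‖g x‖ ≤ C / x ^ (k:ℝ) := by
      rw [le_div_iff₀ hxk]
      have := hC x
      rw [Real.norm_of_nonneg hx.le] at this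
      calc ‖g x‖ * x ^ (k:ℝ) = x ^ k * ‖g x‖ := by
            rw [Real.rpow_natCast]; ring
        _ ≤ C := this
    rw [norm_mul, Complex.norm_cpow_eq_rpow_re_of_pos hx]
    calc ‖g x‖ * x ^ w.re ≤ (C / x ^ (k:ℝ)) * x ^ w.re :=
          mul_le_mul_of_nonneg_right h1 (Real.rpow_nonneg hx.le _)
      _ = C * x ^ (w.re - k) := by
          rw [Real.rpow_sub hx]; ring
  · simpa using ((tendsto_rpow_neg_atTop (by linarith : (0:ℝ) < -(w.re - k))).const_mul C).congr
      (fun x => by rw [neg_neg])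

/-- the Mellin-type transform `𝒰` conjugates `H + 1/2` (with `H = x∂ₓ`)
into multiplication by `is`. -/
theorem stmt19 (f : SchwartzMap ℝ ℂ) (s : ℝ) :
    (∫ v in Set.Ioi (0 : ℝ),
        ((v : ℂ) * deriv f v + (1 / 2 : ℂ) * f v) *
          (v : ℂ) ^ ((1 : ℂ) / 2 - Complex.I * (s : ℂ)) / (v : ℂ))
      = Complex.I * (s : ℂ) *
          ∫ v in Set.Ioi (0 : ℝ),
            f v * (v : ℂ) ^ ((1 : ℂ) / 2 - Complex.I * (s : ℂ)) / (v : ℂ) := by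
  set z : ℂ := (1 : ℂ) / 2 - Complex.I * (s : ℂ) with hz_def
  have hz_re : z.re = 1 / 2 := by
    simp [hz_def, Complex.div_re]
  have hz0 : z ≠ 0 := fun h => by simp [h] at hz_re
  have hz_pos : (0 : ℝ) < z.re := by rw [hz_re]; norm_num
  -- integrabilities
  have I2 : IntegrableOn (fun x : ℝ => f x * (x : ℂ) ^ (z - 1)) (Ioi 0) :=
    aux_integrable f hz_pos
  have I1 : IntegrableOn (fun x : ℝ => deriv f x * (x : ℂ) ^ z) (Ioi 0) := by
    have h := aux_integrable (SchwartzMap.derivCLM ℝ ℂ f) (w := z + 1)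
      (by rw [Complex.add_re, hz_re]; norm_num)
    refine h.congr_fun (fun x hx => ?_) measurableSet_Ioi
    simp [SchwartzMap.derivCLM_apply]
  have I2' : IntegrableOn (fun x : ℝ => f x * (z * (x : ℂ) ^ (z - 1))) (Ioi 0) := by
    have h : IntegrableOn (fun x : ℝ => z * (f x * (x : ℂ) ^ (z - 1))) (Ioi 0) :=
      I2.const_mul z
    refine h.congr_fun (fun x hx => ?_) measurableSet_Ioi
    ring
  have I3 : IntegrableOn (fun x : ℝ => (1/2 : ℂ) * (f x * (x : ℂ) ^ (z - 1))) (Ioi 0) :=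
    I2.const_mul _
  -- derivative facts
  have hu : ∀ x ∈ Ioi (0:ℝ), HasDerivAt (fun y : ℝ => f y) (deriv f x) x :=
    fun x _ => f.differentiableAt.hasDerivAt
  have hv : ∀ x ∈ Ioi (0:ℝ), HasDerivAt (fun y : ℝ => (y : ℂ) ^ z)
      (z * (x : ℂ) ^ (z - 1)) x := by
    intro x hx
    have hx0 : x ≠ 0 := (ne_of_gt hx)
    have hr : z - 1 ≠ -1 := by
      intro h
      have : (z - 1).re = -1 := by rw [h]; simp
      rw [Complex.sub_re, hz_re] at this
      norm_num at this
    have h := (hasDerivAt_ofReal_cpow_const' hx0 hr).const_mul z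
    rw [sub_add_cancel] at h
    have heq : (fun y : ℝ => z * ((y : ℂ) ^ z / z)) = fun y : ℝ => (y : ℂ) ^ z := by
      funext y; field_simp
    rwa [heq] at h
  -- integration by parts
  have hint : IntegrableOn
      (fun x : ℝ => deriv f x * (x : ℂ) ^ z + f x * (z * (x : ℂ) ^ (z - 1))) (Ioi 0) :=
    I1.add I2'
  have h0 : Tendsto ((fun y : ℝ => f y) * fun y : ℝ => (y : ℂ) ^ z)
      (nhdsWithin 0 (Ioi 0)) (nhds 0) := aux_tendsto_zero f hz_pos
  have hinf : Tendsto ((fun y : ℝ => f y) * fun y : ℝ => (y : ℂ) ^ z)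
      atTop (nhds 0) := aux_tendsto_zero_atTop f z
  have key := integral_Ioi_deriv_mul_eq_sub hu hv
    (hint.congr_fun (fun x hx => rfl) measurableSet_Ioi) h0 hinf
  rw [sub_zero] at key
  have key2 : (∫ x in Ioi (0:ℝ), deriv f x * (x : ℂ) ^ z)
      = -z * ∫ x in Ioi (0:ℝ), f x * (x : ℂ) ^ (z - 1) := by
    have hsplit : (∫ x in Ioi (0:ℝ),
        (deriv f x * (x : ℂ) ^ z + f x * (z * (x : ℂ) ^ (z - 1))))
        = (∫ x in Ioi (0:ℝ), deriv f x * (x : ℂ) ^ z)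
          + ∫ x in Ioi (0:ℝ), f x * (z * (x : ℂ) ^ (z - 1)) :=
      integral_add I1 I2'
    have h2 : (∫ x in Ioi (0:ℝ), f x * (z * (x : ℂ) ^ (z - 1)))
        = z * ∫ x in Ioi (0:ℝ), f x * (x : ℂ) ^ (z - 1) := by
      rw [← integral_const_mul]
      exact setIntegral_congr_fun measurableSet_Ioi (fun x hx => by ring)
    rw [hsplit, h2] at key
    linear_combination key
  -- rewrite both integrals in the goal
  have hxz : ∀ x : ℝ, x ∈ Ioi (0:ℝ) → (x : ℂ) ^ z = (x : ℂ) ^ (z - 1) * x := by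
    intro x hx
    have hx0 : (x : ℂ) ≠ 0 := ofReal_ne_zero.mpr (ne_of_gt hx)
    have h := Complex.cpow_add (z - 1) 1 hx0
    rwa [sub_add_cancel, Complex.cpow_one] at h
  have hR : (∫ v in Ioi (0:ℝ), f v * (v : ℂ) ^ z / (v : ℂ))
      = ∫ x in Ioi (0:ℝ), f x * (x : ℂ) ^ (z - 1) := by
    refine setIntegral_congr_fun measurableSet_Ioi (fun x hx => ?_)
    have hx0 : (x : ℂ) ≠ 0 := ofReal_ne_zero.mpr (ne_of_gt hx)
    rw [hxz x hx]
    field_simp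
  have hL : (∫ v in Ioi (0:ℝ),
      ((v : ℂ) * deriv f v + (1 / 2 : ℂ) * f v) * (v : ℂ) ^ z / (v : ℂ))
      = (∫ x in Ioi (0:ℝ), deriv f x * (x : ℂ) ^ z)
        + (1/2 : ℂ) * ∫ x in Ioi (0:ℝ), f x * (x : ℂ) ^ (z - 1) := by
    rw [← integral_const_mul, ← integral_add I1 I3]
    refine setIntegral_congr_fun measurableSet_Ioi (fun x hx => ?_)
    have hx0 : (x : ℂ) ≠ 0 := ofReal_ne_zero.mpr (ne_of_gt hx)
    rw [hxz x hx]
    field_simp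
  rw [hL, hR, key2]
  ring
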